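/- arXiv:0710.5552 — 2 statements merged into one kernel-verified Lean document; each statement's English description precedes it below -/
import Mathlib

section
/- Suppose z : [0,T] → ℝ is C² with z(0)=1, z'(0)=X, and z''(τ) ≥ −K·z(τ) − L·∫₀^τ z(s)ds − P for all τ where z > 0, with constants K, L, P ≥ 0 and |X| ≤ χ. Then z(τ) ≥ Y(τ) := 1 − χτ − ½(P+K)τ² − (1/6)(χK+L)τ³ − (χL/24)τ⁴ for all τ in [0,T] where Y remains positive. -/
open Set intervalIntegral MeasureTheory

private lemma key_step (T K L P χ : ℝ) (hK : 0 ≤ K) (hL : 0 ≤ L) (hP : 0 ≤ P) (hχ : 0 ≤ χ)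
    (z z' z'' : ℝ → ℝ)
    (hz' : ∀ t ∈ Icc (0:ℝ) T, HasDerivAt z (z' t) t)
    (hz'' : ∀ t ∈ Icc (0:ℝ) T, HasDerivAt z' (z'' t) t)
    (hcont : ContinuousOn z'' (Icc 0 T))
    (hz0 : z 0 = 1) (hz'0 : |z' 0| ≤ χ)
    (hineq : ∀ τ ∈ Icc (0:ℝ) T, 0 < z τ →
      z'' τ ≥ -K * z τ - L * (∫ s in (0:ℝ)..τ, z s) - P)
    (a : ℝ) (ha0 : 0 < a) (haT : a ≤ T)
    (hsmall : K*a^2/6 + L*a^3/24 ≤ 1)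
    (hpos : ∀ s, 0 ≤ s → s < a → 0 < z s) :
    z a ≥ 1 - χ*a - (P+K)/2*a^2 - (χ*K+L)/6*a^3 - χ*L/24*a^4 := by
  have hsub : Icc (0:ℝ) a ⊆ Icc 0 T := Icc_subset_Icc le_rfl haT
  obtain ⟨φ, hφe⟩ : ∃ f : ℝ → ℝ, ∀ s, f s = (a-s) - K*(a-s)^3/6 - L*(a-s)^4/24 :=
    ⟨_, fun s => rfl⟩
  obtain ⟨φ', hφ'e⟩ : ∃ f : ℝ → ℝ, ∀ s, f s = -1 + K*(a-s)^2/2 + L*(a-s)^3/6 :=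
    ⟨_, fun s => rfl⟩
  obtain ⟨φ'', hφ''e⟩ : ∃ f : ℝ → ℝ, ∀ s, f s = -(K*(a-s)) - L*(a-s)^2/2 :=
    ⟨_, fun s => rfl⟩
  obtain ⟨Φ, hΦe⟩ : ∃ f : ℝ → ℝ, ∀ s, f s = (a-s)^2/2 - K*(a-s)^4/24 - L*(a-s)^5/120 :=
    ⟨_, fun s => rfl⟩
  set I : ℝ → ℝ := fun s => ∫ u in (0:ℝ)..s, z u with hI
  have hφfun : φ = fun s => (a-s) - K*(a-s)^3/6 - L*(a-s)^4/24 := funext hφe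
  have hφ''fun : φ'' = fun s => -(K*(a-s)) - L*(a-s)^2/2 := funext hφ''e
  have hΦfun : Φ = fun s => (a-s)^2/2 - K*(a-s)^4/24 - L*(a-s)^5/120 := funext hΦe
  -- derivatives of the polynomial weights
  have hwd : ∀ s : ℝ, HasDerivAt (fun u : ℝ => a - u) (-1) s := by
    intro s; simpa using (hasDerivAt_id s).const_sub a
  have hφd : ∀ s : ℝ, HasDerivAt φ (φ' s) s := by
    intro s
    rw [hφfun, hφ'e]
    have h3 := (((hwd s).pow 3).const_mul K).div_const 6
    have h4 := (((hwd s).pow 4).const_mul L).div_const 24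
    have := ((hwd s).sub h3).sub h4
    refine this.congr_deriv ?_
    ring
  have hφ'd : ∀ s : ℝ, HasDerivAt φ' (φ'' s) s := by
    intro s
    rw [funext hφ'e, hφ''e]
    have h2 := (((hwd s).pow 2).const_mul K).div_const 2
    have h3 := (((hwd s).pow 3).const_mul L).div_const 6
    have := (h2.const_add (-1)).add h3
    refine this.congr_deriv ?_
    ring
  have hΦd : ∀ s : ℝ, HasDerivAt Φ (-(φ s)) s := by
    intro s
    rw [hΦfun, hφe]
    have h2 := ((hwd s).pow 2).div_const 2
    have h4 := (((hwd s).pow 4).const_mul K).div_const 24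
    have h5 := (((hwd s).pow 5).const_mul L).div_const 120
    have := (h2.sub h4).sub h5
    refine this.congr_deriv ?_
    ring
  have hφc : Continuous φ := by rw [hφfun]; fun_prop
  have hφ''c : Continuous φ'' := by rw [hφ''fun]; fun_prop
  have hΦc : Continuous Φ := by rw [hΦfun]; fun_prop
  -- continuity of z, z'
  have hzc : ContinuousOn z (Icc 0 T) := fun t ht => ((hz' t ht).continuousAt).continuousWithinAt
  have hzca : ContinuousOn z (Icc 0 a) := hzc.mono hsub
  have hIc : ContinuousOn I (Icc 0 a) := by
    have h0 : IntegrableOn z (uIcc 0 a) := by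
      rw [uIcc_of_le ha0.le]; exact hzca.integrableOn_Icc
    have := intervalIntegral.continuousOn_primitive_interval (f := z) (μ := volume)
      (a := 0) (b := a) h0
    rwa [uIcc_of_le ha0.le] at this
  have hId : ∀ s ∈ Ioo (0:ℝ) a, HasDerivAt I (z s) s := by
    intro s hs
    have hsT : s ∈ Icc (0:ℝ) T := ⟨hs.1.le, hs.2.le.trans haT⟩
    refine intervalIntegral.integral_hasDerivAt_right ?_ ?_ ((hz' s hsT).continuousAt)
    · have hcs : ContinuousOn z (uIcc 0 s) := by
        rw [uIcc_of_le hs.1.le]; exact hzc.mono (Icc_subset_Icc le_rfl hsT.2)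
      exact hcs.intervalIntegrable
    · exact ContinuousOn.stronglyMeasurableAtFilter isOpen_Ioo
        (hzc.mono Ioo_subset_Icc_self) s ⟨hs.1, lt_of_lt_of_le hs.2 haT⟩
  -- values at endpoints
  have hφa : φ a = 0 := by rw [hφe]; ring
  have hφ'a : φ' a = -1 := by rw [hφ'e]; ring
  have hφ''a : φ'' a = 0 := by rw [hφ''e]; ring
  have hΦa : Φ a = 0 := by rw [hΦe]; ring
  have hI0 : I 0 = 0 := by simp [hI]
  -- integrability of the main integrand
  have hint2 : IntervalIntegrable (fun s => φ s * z'' s - φ'' s * z s) volume 0 a := by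
    apply ContinuousOn.intervalIntegrable
    rw [uIcc_of_le ha0.le]
    exact (hφc.continuousOn.mul (hcont.mono hsub)).sub (hφ''c.continuousOn.mul hzca)
  -- FTC 1 : weighted Wronskian
  have hFTC1 : ∫ s in (0:ℝ)..a, (φ s * z'' s - φ'' s * z s)
      = (φ a * z' a - φ' a * z a) - (φ 0 * z' 0 - φ' 0 * z 0) := by
    apply intervalIntegral.integral_eq_sub_of_hasDerivAt _ hint2
    intro s hs
    rw [uIcc_of_le ha0.le] at hs
    have h1 := (hφd s).mul (hz'' s (hsub hs))
    have h2 := (hφ'd s).mul (hz' s (hsub hs))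
    have := h1.sub h2
    refine this.congr_deriv ?_
    ring
  -- FTC for ∫ φ
  have hFTCφ : ∫ s in (0:ℝ)..a, φ s = Φ 0 := by
    have h : ∫ s in (0:ℝ)..a, φ s = (-(Φ a)) - (-(Φ 0)) := by
      apply intervalIntegral.integral_eq_sub_of_hasDerivAt
      · intro s _
        have hn := (hΦd s).neg; simp only [neg_neg] at hn; exact hn
      · apply ContinuousOn.intervalIntegrable
        rw [uIcc_of_le ha0.le]
        exact hφc.continuousOn
    rw [h, hΦa]; ring
  -- FTC for ∫ (Φ z - φ I) = 0
  have hintm : IntervalIntegrable (fun s => Φ s * z s - φ s * I s) volume 0 a := by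
    apply ContinuousOn.intervalIntegrable
    rw [uIcc_of_le ha0.le]
    exact (hΦc.continuousOn.mul hzca).sub (hφc.continuousOn.mul hIc)
  have hFTC2 : ∫ s in (0:ℝ)..a, (Φ s * z s - φ s * I s) = 0 := by
    have h : ∫ s in (0:ℝ)..a, (Φ s * z s - φ s * I s) = Φ a * I a - Φ 0 * I 0 := by
      apply intervalIntegral.integral_eq_sub_of_hasDeriv_right_of_le ha0.le
      · exact hΦc.continuousOn.mul hIc
      · intro s hs
        have := ((hΦd s).mul (hId s hs)).hasDerivWithinAt (s := Ioi s)
        refine this.congr_deriv ?_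
        ring
      · exact hintm
    rw [h, hΦa, hI0]; ring
  -- nonnegativity of φ on [0,a]
  have hφnn : ∀ s ∈ Icc (0:ℝ) a, 0 ≤ φ s := by
    intro s hs
    have hw0 : 0 ≤ a - s := by linarith [hs.2]
    have hwa : a - s ≤ a := by linarith [hs.1]
    have h2 : (a-s)^2 ≤ a^2 := pow_le_pow_left₀ hw0 hwa 2
    have h3 : (a-s)^3 ≤ a^3 := pow_le_pow_left₀ hw0 hwa 3
    have hK2 : K*(a-s)^2 ≤ K*a^2 := mul_le_mul_of_nonneg_left h2 hK
    have hL3 : L*(a-s)^3 ≤ L*a^3 := mul_le_mul_of_nonneg_left h3 hL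
    have heq : (a-s) - K*(a-s)^3/6 - L*(a-s)^4/24
        = (a-s)*(1 - (K*(a-s)^2/6 + L*(a-s)^3/24)) := by ring
    rw [hφe, heq]
    exact mul_nonneg hw0 (by linarith)
  -- pointwise comparison
  have hpt : ∀ s ∈ Icc (0:ℝ) a,
      L * (Φ s * z s - φ s * I s) - P * φ s ≤ φ s * z'' s - φ'' s * z s := by
    intro s hs
    rcases eq_or_lt_of_le hs.2 with heq | hlt
    · rw [heq, hφa, hφ''a, hΦa]
      norm_num
    · have hzs : 0 < z s := hpos s hs.1 hlt
      have hzi := hineq s (hsub hs) hzs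
      have h1 : φ s * (-K * z s - L * I s - P) ≤ φ s * z'' s :=
        mul_le_mul_of_nonneg_left hzi (hφnn s hs)
      have hw0 : 0 ≤ a - s := by linarith [hs.2]
      have hfacnp : K * φ s + φ'' s + L * Φ s ≤ 0 := by
        have hfac : K * φ s + φ'' s + L * Φ s
            = -(K^2*(a-s)^3/6 + K*L*(a-s)^4/12 + L^2*(a-s)^5/120) := by
          rw [hφe, hφ''e, hΦe]; ring
        rw [hfac]
        have t1 : 0 ≤ K^2*(a-s)^3 := mul_nonneg (sq_nonneg K) (pow_nonneg hw0 3)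
        have t2 : 0 ≤ K*L*(a-s)^4 := mul_nonneg (mul_nonneg hK hL) (pow_nonneg hw0 4)
        have t3 : 0 ≤ L^2*(a-s)^5 := mul_nonneg (sq_nonneg L) (pow_nonneg hw0 5)
        linarith
      have h2 : (K * φ s + φ'' s + L * Φ s) * z s ≤ 0 :=
        mul_nonpos_of_nonpos_of_nonneg hfacnp hzs.le
      have key : φ s * z'' s - φ'' s * z s - (L * (Φ s * z s - φ s * I s) - P * φ s)
          = (φ s * z'' s - φ s * (-K * z s - L * I s - P))
            + (-((K * φ s + φ'' s + L * Φ s) * z s)) := by ring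
      linarith [h1, h2, key.ge, key.le]
  -- integrate the comparison
  have hint1 : IntervalIntegrable (fun s => L * (Φ s * z s - φ s * I s) - P * φ s) volume 0 a := by
    apply ContinuousOn.intervalIntegrable
    rw [uIcc_of_le ha0.le]
    exact (continuousOn_const.mul ((hΦc.continuousOn.mul hzca).sub
      (hφc.continuousOn.mul hIc))).sub (continuousOn_const.mul hφc.continuousOn)
  have hmono := intervalIntegral.integral_mono_on (μ := volume) ha0.le hint1 hint2 hpt
  have hLHS : ∫ s in (0:ℝ)..a, (L * (Φ s * z s - φ s * I s) - P * φ s) = - (P * Φ 0) := by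
    have hintA : IntervalIntegrable (fun s => L * (Φ s * z s - φ s * I s)) volume 0 a :=
      hintm.const_mul L
    have hintB : IntervalIntegrable (fun s => P * φ s) volume 0 a := by
      apply ContinuousOn.intervalIntegrable
      rw [uIcc_of_le ha0.le]
      exact continuousOn_const.mul hφc.continuousOn
    rw [intervalIntegral.integral_sub hintA hintB, intervalIntegral.integral_const_mul,
      intervalIntegral.integral_const_mul, hFTC2, hFTCφ]
    ring
  rw [hLHS, hFTC1, hφa, hφ'a, hz0] at hmono
  -- conclude
  have hXge : -χ ≤ z' 0 := (abs_le.mp hz'0).1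
  have hφ0nn : 0 ≤ φ 0 := hφnn 0 ⟨le_rfl, ha0.le⟩
  have h5 : φ 0 * (-χ) ≤ φ 0 * z' 0 := mul_le_mul_of_nonneg_left hXge hφ0nn
  have e1 : φ 0 = a - K*a^3/6 - L*a^4/24 := by rw [hφe]; ring
  have e2 : φ' 0 = -1 + K*a^2/2 + L*a^3/6 := by rw [hφ'e]; ring
  have e3 : Φ 0 = a^2/2 - K*a^4/24 - L*a^5/120 := by rw [hΦe]; ring
  rw [e1, e2, e3] at hmono
  rw [e1] at h5
  have t1 : 0 ≤ χ*K*a^3 := mul_nonneg (mul_nonneg hχ hK) (pow_nonneg ha0.le 3)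
  have t2 : 0 ≤ χ*L*a^4 := mul_nonneg (mul_nonneg hχ hL) (pow_nonneg ha0.le 4)
  have t3 : 0 ≤ P*K*a^4 := mul_nonneg (mul_nonneg hP hK) (pow_nonneg ha0.le 4)
  have t4 : 0 ≤ P*L*a^5 := mul_nonneg (mul_nonneg hP hL) (pow_nonneg ha0.le 5)
  nlinarith [hmono, h5, t1, t2, t3, t4]

theorem stmt1 (T K L P χ : ℝ) (hK : 0 ≤ K) (hL : 0 ≤ L) (hP : 0 ≤ P) (hχ : 0 ≤ χ)
    (z z' z'' : ℝ → ℝ)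
    (hz' : ∀ t ∈ Icc (0:ℝ) T, HasDerivAt z (z' t) t)
    (hz'' : ∀ t ∈ Icc (0:ℝ) T, HasDerivAt z' (z'' t) t)
    (hcont : ContinuousOn z'' (Icc 0 T))
    (hz0 : z 0 = 1) (hz'0 : |z' 0| ≤ χ)
    (hineq : ∀ τ ∈ Icc (0:ℝ) T, 0 < z τ →
      z'' τ ≥ -K * z τ - L * (∫ s in (0:ℝ)..τ, z s) - P) :
    ∀ τ ∈ Icc (0:ℝ) T,
      (∀ s ∈ Icc (0:ℝ) τ,
        0 < 1 - χ*s - (P+K)/2*s^2 - (χ*K+L)/6*s^3 - χ*L/24*s^4) →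
      z τ ≥ 1 - χ*τ - (P+K)/2*τ^2 - (χ*K+L)/6*τ^3 - χ*L/24*τ^4 := by
  intro τ hτ hY
  rcases eq_or_lt_of_le hτ.1 with h0 | h0
  · rw [← h0]
    rw [hz0]; norm_num
  · -- the smallness condition on [0, τ]
    have hsm : ∀ b, 0 ≤ b → b ≤ τ → K*b^2/6 + L*b^3/24 ≤ 1 := by
      intro b hb hbτ
      have hYτ := hY τ ⟨hτ.1, le_rfl⟩
      have h2 : b^2 ≤ τ^2 := pow_le_pow_left₀ hb hbτ 2
      have h3 : b^3 ≤ τ^3 := pow_le_pow_left₀ hb hbτ 3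
      have k2 : K*b^2 ≤ K*τ^2 := mul_le_mul_of_nonneg_left h2 hK
      have l3 : L*b^3 ≤ L*τ^3 := mul_le_mul_of_nonneg_left h3 hL
      have n1 : 0 ≤ χ*τ := mul_nonneg hχ h0.le
      have n2 : 0 ≤ P*τ^2 := mul_nonneg hP (pow_nonneg h0.le 2)
      have n3 : 0 ≤ χ*K*τ^3 := mul_nonneg (mul_nonneg hχ hK) (pow_nonneg h0.le 3)
      have n4 : 0 ≤ χ*L*τ^4 := mul_nonneg (mul_nonneg hχ hL) (pow_nonneg h0.le 4)
      have n5 : 0 ≤ K*τ^2 := mul_nonneg hK (pow_nonneg h0.le 2)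
      have n6 : 0 ≤ L*τ^3 := mul_nonneg hL (pow_nonneg h0.le 3)
      nlinarith [hYτ]
    have hzc : ContinuousOn z (Icc 0 T) :=
      fun t ht => ((hz' t ht).continuousAt).continuousWithinAt
    -- z is positive on [0, τ]
    have hzpos : ∀ s ∈ Icc (0:ℝ) τ, 0 < z s := by
      by_contra hc
      push_neg at hc
      obtain ⟨s₀, hs₀, hzs₀⟩ := hc
      have hScl : IsClosed (Icc (0:ℝ) τ ∩ z ⁻¹' Iic 0) :=
        (hzc.mono (Icc_subset_Icc le_rfl hτ.2)).preimage_isClosed_of_isClosed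
          isClosed_Icc isClosed_Iic
      have hSne : (Icc (0:ℝ) τ ∩ z ⁻¹' Iic 0).Nonempty := ⟨s₀, hs₀, hzs₀⟩
      have hSbd : BddBelow (Icc (0:ℝ) τ ∩ z ⁻¹' Iic 0) := ⟨0, fun t ht => ht.1.1⟩
      set t₁ := sInf (Icc (0:ℝ) τ ∩ z ⁻¹' Iic 0) with ht₁
      have ht₁S : t₁ ∈ Icc (0:ℝ) τ ∩ z ⁻¹' Iic 0 := hScl.csInf_mem hSne hSbd
      have hzt₁ : z t₁ ≤ 0 := ht₁S.2
      have ht₁0 : 0 < t₁ := by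
        rcases eq_or_lt_of_le ht₁S.1.1 with h | h
        · exfalso; rw [← h, hz0] at hzt₁; linarith
        · exact h
      have hposlt : ∀ s, 0 ≤ s → s < t₁ → 0 < z s := by
        intro s hs hst
        by_contra hns; push_neg at hns
        have hmem : s ∈ Icc (0:ℝ) τ ∩ z ⁻¹' Iic 0 :=
          ⟨⟨hs, (hst.le).trans ht₁S.1.2⟩, hns⟩
        exact absurd (csInf_le hSbd hmem) (not_le.mpr hst)
      have hkey := key_step T K L P χ hK hL hP hχ z z' z'' hz' hz'' hcont hz0 hz'0 hineq
        t₁ ht₁0 (ht₁S.1.2.trans hτ.2) (hsm t₁ ht₁S.1.1 ht₁S.1.2) hposlt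
      have hYt₁ := hY t₁ ht₁S.1
      linarith
    exact key_step T K L P χ hK hL hP hχ z z' z'' hz' hz'' hcont hz0 hz'0 hineq
      τ h0 hτ.2 (hsm τ h0.le le_rfl) (fun s hs hlt => hzpos s ⟨hs, hlt.le⟩)
end

section
/- Let z, y : [0,T] → ℝ be continuous with z, y and given data satisfying: z(τ) ≥ P(τ) − ∫₀^τ∫₀^σ [a(σ')z(σ') + ∫₀^{σ'}(b(σ'')z(σ'') + g(σ''))dσ''] dσ' dσ in absolute value form as in (yJacobi), and y(τ) = P_y(τ) + the same double-triple integral with z replaced by y, where a, b ≥ 0 are continuous, P_y(τ) − P(τ) ≥ ε for some ε > 0 pointwise on [0,T] (from the initial data choice). Then z(τ) ≤ y(τ) for all τ ∈ [0,T]. -/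
open Set intervalIntegral

theorem stmt9 (T ε : ℝ) (hT : 0 ≤ T) (hε : 0 < ε)
    (z y a b g : ℝ → ℝ)
    (hz : ContinuousOn z (Icc 0 T)) (hy : ContinuousOn y (Icc 0 T))
    (ha : ContinuousOn a (Icc 0 T)) (hb : ContinuousOn b (Icc 0 T))
    (hgc : ContinuousOn g (Icc 0 T))
    (hanneg : ∀ t ∈ Icc (0:ℝ) T, 0 ≤ a t) (hbnneg : ∀ t ∈ Icc (0:ℝ) T, 0 ≤ b t)
    (hgnneg : ∀ t ∈ Icc (0:ℝ) T, 0 ≤ g t)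
    (p0 p1 p2 r0 r1 r2 : ℝ)
    (hsep : ∀ τ ∈ Icc (0:ℝ) T,
      (p0 + p1*τ + p2*τ^2) + ε ≤ r0 + r1*τ + r2*τ^2)
    (hzineq : ∀ τ ∈ Icc (0:ℝ) T,
      |z τ - (p0 + p1*τ + p2*τ^2)| ≤
        ∫ σ in (0:ℝ)..τ, ∫ σ' in (0:ℝ)..σ,
          (a σ' * z σ' + ∫ σ'' in (0:ℝ)..σ', (b σ'' * z σ'' + g σ'')))
    (hyeq : ∀ τ ∈ Icc (0:ℝ) T,
      y τ = (r0 + r1*τ + r2*τ^2) +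
        ∫ σ in (0:ℝ)..τ, ∫ σ' in (0:ℝ)..σ,
          (a σ' * y σ' + ∫ σ'' in (0:ℝ)..σ', (b σ'' * y σ'' + g σ''))) :
    ∀ τ ∈ Icc (0:ℝ) T, z τ ≤ y τ := by
  -- w = y - z
  have hIccT : uIcc (0:ℝ) T = Icc 0 T := uIcc_of_le hT
  have hsub : ∀ u ∈ Icc (0:ℝ) T, Icc (0:ℝ) u ⊆ Icc 0 T :=
    fun u hu => Icc_subset_Icc le_rfl hu.2
  have hii : ∀ {f : ℝ → ℝ}, ContinuousOn f (Icc 0 T) →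
      ∀ u ∈ Icc (0:ℝ) T, IntervalIntegrable f MeasureTheory.volume 0 u := by
    intro f hf u hu
    exact (hf.mono (by rw [uIcc_of_le hu.1]; exact hsub u hu)).intervalIntegrable
  have hprim : ∀ {f : ℝ → ℝ}, ContinuousOn f (Icc 0 T) →
      ContinuousOn (fun x => ∫ t in (0:ℝ)..x, f t) (Icc 0 T) := by
    intro f hf
    have := intervalIntegral.continuousOn_primitive_interval
      (f := f) (a := (0:ℝ)) (b := T) (μ := MeasureTheory.volume) (by rw [hIccT]; exact hf.integrableOn_Icc)
    rwa [hIccT] at this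
  set w : ℝ → ℝ := fun t => y t - z t with hw_def
  have hcw : ContinuousOn w (Icc 0 T) := hy.sub hz
  -- inner integrands
  have hGyc : ContinuousOn
      (fun σ' => a σ' * y σ' + ∫ σ'' in (0:ℝ)..σ', (b σ'' * y σ'' + g σ'')) (Icc 0 T) :=
    (ha.mul hy).add (hprim ((hb.mul hy).add hgc))
  have hGzc : ContinuousOn
      (fun σ' => a σ' * z σ' + ∫ σ'' in (0:ℝ)..σ', (b σ'' * z σ'' + g σ'')) (Icc 0 T) :=
    (ha.mul hz).add (hprim ((hb.mul hz).add hgc))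
  have hGwc : ContinuousOn
      (fun σ' => a σ' * w σ' + ∫ σ'' in (0:ℝ)..σ', (b σ'' * w σ'')) (Icc 0 T) :=
    (ha.mul hcw).add (hprim (hb.mul hcw))
  -- difference of inner integrands
  have hGdiff : ∀ σ' ∈ Icc (0:ℝ) T,
      (a σ' * y σ' + ∫ σ'' in (0:ℝ)..σ', (b σ'' * y σ'' + g σ'')) -
      (a σ' * z σ' + ∫ σ'' in (0:ℝ)..σ', (b σ'' * z σ'' + g σ'')) =
      a σ' * w σ' + ∫ σ'' in (0:ℝ)..σ', (b σ'' * w σ'') := by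
    intro σ' hσ'
    have h1 : (∫ σ'' in (0:ℝ)..σ', (b σ'' * y σ'' + g σ'')) -
        (∫ σ'' in (0:ℝ)..σ', (b σ'' * z σ'' + g σ'')) =
        ∫ σ'' in (0:ℝ)..σ', (b σ'' * w σ'') := by
      rw [← intervalIntegral.integral_sub (hii (f := fun σ'' => b σ'' * y σ'' + g σ'') ((hb.mul hy).add hgc) σ' hσ')
        (hii (f := fun σ'' => b σ'' * z σ'' + g σ'') ((hb.mul hz).add hgc) σ' hσ')]
      apply intervalIntegral.integral_congr
      intro t _
      simp only [hw_def]
      ring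
    have h2 : a σ' * y σ' - a σ' * z σ' = a σ' * w σ' := by
      simp only [hw_def]; ring
    linarith [h1, h2]
  -- difference of middle integrals
  have hmid : ∀ σ ∈ Icc (0:ℝ) T,
      (∫ σ' in (0:ℝ)..σ, (a σ' * y σ' + ∫ σ'' in (0:ℝ)..σ', (b σ'' * y σ'' + g σ''))) -
      (∫ σ' in (0:ℝ)..σ, (a σ' * z σ' + ∫ σ'' in (0:ℝ)..σ', (b σ'' * z σ'' + g σ''))) =
      ∫ σ' in (0:ℝ)..σ, (a σ' * w σ' + ∫ σ'' in (0:ℝ)..σ', (b σ'' * w σ'')) := by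
    intro σ hσ
    rw [← intervalIntegral.integral_sub (hii hGyc σ hσ) (hii hGzc σ hσ)]
    apply intervalIntegral.integral_congr
    intro t ht
    rw [uIcc_of_le hσ.1] at ht
    exact hGdiff t (hsub σ hσ ht)
  -- continuity of middle primitives
  have hFyc : ContinuousOn (fun σ => ∫ σ' in (0:ℝ)..σ,
      (a σ' * y σ' + ∫ σ'' in (0:ℝ)..σ', (b σ'' * y σ'' + g σ''))) (Icc 0 T) := hprim hGyc
  have hFzc : ContinuousOn (fun σ => ∫ σ' in (0:ℝ)..σ,
      (a σ' * z σ' + ∫ σ'' in (0:ℝ)..σ', (b σ'' * z σ'' + g σ''))) (Icc 0 T) := hprim hGzc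
  -- difference of outer integrals
  have houter : ∀ τ ∈ Icc (0:ℝ) T,
      (∫ σ in (0:ℝ)..τ, ∫ σ' in (0:ℝ)..σ,
        (a σ' * y σ' + ∫ σ'' in (0:ℝ)..σ', (b σ'' * y σ'' + g σ''))) -
      (∫ σ in (0:ℝ)..τ, ∫ σ' in (0:ℝ)..σ,
        (a σ' * z σ' + ∫ σ'' in (0:ℝ)..σ', (b σ'' * z σ'' + g σ''))) =
      ∫ σ in (0:ℝ)..τ, ∫ σ' in (0:ℝ)..σ,
        (a σ' * w σ' + ∫ σ'' in (0:ℝ)..σ', (b σ'' * w σ'')) := by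
    intro τ hτ
    rw [← intervalIntegral.integral_sub (hii hFyc τ hτ) (hii hFzc τ hτ)]
    apply intervalIntegral.integral_congr
    intro t ht
    rw [uIcc_of_le hτ.1] at ht
    exact hmid t (hsub τ hτ ht)
  -- key inequality : ε + J τ ≤ w τ
  have hkey : ∀ τ ∈ Icc (0:ℝ) T,
      ε + (∫ σ in (0:ℝ)..τ, ∫ σ' in (0:ℝ)..σ,
        (a σ' * w σ' + ∫ σ'' in (0:ℝ)..σ', (b σ'' * w σ''))) ≤ w τ := by
    intro τ hτ
    have h1 := (abs_le.mp (hzineq τ hτ)).2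
    have h2 := hyeq τ hτ
    have h3 := hsep τ hτ
    have h4 := houter τ hτ
    simp only [hw_def]
    linarith
  -- nonnegativity of J on [0,t₀] when w ≥ 0 there
  have hJnn : ∀ t₀ ∈ Icc (0:ℝ) T, (∀ t ∈ Icc (0:ℝ) t₀, 0 ≤ w t) →
      0 ≤ ∫ σ in (0:ℝ)..t₀, ∫ σ' in (0:ℝ)..σ,
        (a σ' * w σ' + ∫ σ'' in (0:ℝ)..σ', (b σ'' * w σ'')) := by
    intro t₀ ht₀ hwnn
    apply intervalIntegral.integral_nonneg ht₀.1
    intro σ hσ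
    apply intervalIntegral.integral_nonneg hσ.1
    intro σ' hσ'
    have hσ'T : σ' ∈ Icc (0:ℝ) T := ⟨hσ'.1, hσ'.2.trans (hσ.2.trans ht₀.2)⟩
    have hσ't₀ : σ' ∈ Icc (0:ℝ) t₀ := ⟨hσ'.1, hσ'.2.trans hσ.2⟩
    apply add_nonneg (mul_nonneg (hanneg σ' hσ'T) (hwnn σ' hσ't₀))
    apply intervalIntegral.integral_nonneg hσ'.1
    intro σ'' hσ''
    exact mul_nonneg (hbnneg σ'' ⟨hσ''.1, hσ''.2.trans hσ'T.2⟩)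
      (hwnn σ'' ⟨hσ''.1, hσ''.2.trans hσ't₀.2⟩)
  -- conclusion by contradiction
  intro τ hτ
  by_contra hcon
  push_neg at hcon
  have hwτ : w τ < 0 := by simp only [hw_def]; linarith
  -- the set where w ≤ 0
  set S : Set ℝ := Icc 0 T ∩ w ⁻¹' (Iic 0) with hS_def
  have hSne : S.Nonempty := ⟨τ, hτ, le_of_lt hwτ⟩
  have hSclosed : IsClosed S :=
    hcw.preimage_isClosed_of_isClosed isClosed_Icc isClosed_Iic
  have hSbdd : BddBelow S := ⟨0, fun x hx => hx.1.1⟩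
  set t₀ : ℝ := sInf S with ht₀_def
  have ht₀S : t₀ ∈ S := hSclosed.csInf_mem hSne hSbdd
  have ht₀Icc : t₀ ∈ Icc (0:ℝ) T := ht₀S.1
  have ht₀le : w t₀ ≤ 0 := ht₀S.2
  -- w > 0 on [0, t₀)
  have hpos : ∀ t ∈ Ico (0:ℝ) t₀, 0 < w t := by
    intro t ht
    by_contra h
    push_neg at h
    have htS : t ∈ S := ⟨⟨ht.1, ht.2.le.trans ht₀Icc.2⟩, h⟩
    exact absurd (csInf_le hSbdd htS) (not_le.mpr ht.2)
  -- t₀ > 0 since w 0 ≥ ε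
  have hw0 : ε ≤ w 0 := by
    have := hkey 0 ⟨le_rfl, hT⟩
    simpa using this
  have ht₀pos : 0 < t₀ := by
    rcases lt_or_eq_of_le ht₀Icc.1 with h | h
    · exact h
    · exfalso; rw [← h] at ht₀le; linarith
  -- w t₀ ≥ 0 by continuity from the left
  have hwt₀nn : 0 ≤ w t₀ := by
    have hmem : t₀ ∈ closure (Ico (0:ℝ) t₀) := by
      rw [closure_Ico (ne_of_lt ht₀pos)]
      exact ⟨ht₀Icc.1, le_rfl⟩
    have hnb : (nhdsWithin t₀ (Ico (0:ℝ) t₀)).NeBot :=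
      mem_closure_iff_nhdsWithin_neBot.mp hmem
    have htend : Filter.Tendsto w (nhdsWithin t₀ (Ico (0:ℝ) t₀)) (nhds (w t₀)) := by
      have hcont : ContinuousWithinAt w (Icc 0 T) t₀ := hcw t₀ ht₀Icc
      exact hcont.tendsto.comp (Filter.Tendsto.mono_left Filter.tendsto_id
        (nhdsWithin_mono t₀ (fun x hx => ⟨hx.1, hx.2.le.trans ht₀Icc.2⟩)))
    refine ge_of_tendsto htend ?_
    filter_upwards [self_mem_nhdsWithin] with x hx
    exact (hpos x hx).le
  -- w ≥ 0 on [0, t₀]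
  have hwnn : ∀ t ∈ Icc (0:ℝ) t₀, 0 ≤ w t := by
    intro t ht
    rcases lt_or_eq_of_le ht.2 with h | h
    · exact (hpos t ⟨ht.1, h⟩).le
    · rw [h]; exact hwt₀nn
  have := hkey t₀ ht₀Icc
  have := hJnn t₀ ht₀Icc hwnn
  linarith
end
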